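/- Let h be analytic with h(z) ≠ 0 and set u = |z−w|·γ(h,z), where γ(h,z) = sup_{k ≥ 1} |h^{(k)}(z)/(k! h(z))|^{1/k}. If u < 1, then 1 − u/(1−u) ≤ |h(w)/h(z)| ≤ 1/(1−u). -/

import Mathlib

open Complex Metric

def gammaSet (h : ℂ → ℂ) (z : ℂ) : Set ℝ :=
  {x | ∃ k : ℕ, 1 ≤ k ∧ x = ‖iteratedDeriv k h z / ((k.factorial : ℂ) * h z)‖ ^ ((1 : ℝ) / k)}

theorem stmt1 (h : ℂ → ℂ) (z w : ℂ) (R : ℝ) (hR : 0 < R) (hw : w ∈ ball z R)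
    (hdiff : DifferentiableOn ℂ h (ball z R)) (hz : h z ≠ 0)
    (γ : ℝ) (hγ : IsLUB (gammaSet h z) γ)
    (hu : ‖z - w‖ * γ < 1) :
    1 - (‖z - w‖ * γ) / (1 - ‖z - w‖ * γ) ≤ ‖h w / h z‖ ∧
      ‖h w / h z‖ ≤ 1 / (1 - ‖z - w‖ * γ) := by
  set u : ℝ := ‖z - w‖ * γ with hu_def
  -- γ ≥ 0
  have hγ0 : 0 ≤ γ := by
    refine le_trans ?_ (hγ.1 ⟨1, le_refl 1, rfl⟩)
    positivity
  have hu0 : 0 ≤ u := mul_nonneg (norm_nonneg _) hγ0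
  have h1u : 0 < 1 - u := by linarith
  -- coefficient bound
  have hcoef : ∀ k : ℕ, 1 ≤ k →
      ‖iteratedDeriv k h z / ((k.factorial : ℂ) * h z)‖ ≤ γ ^ k := by
    intro k hk
    have hmem : ‖iteratedDeriv k h z / ((k.factorial : ℂ) * h z)‖ ^ ((1 : ℝ) / k) ≤ γ :=
      hγ.1 ⟨k, hk, rfl⟩
    have hk0 : (k : ℝ) ≠ 0 := Nat.cast_ne_zero.mpr (by omega)
    have := Real.rpow_le_rpow (Real.rpow_nonneg (norm_nonneg _) _) hmem
      (Nat.cast_nonneg k)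
    rwa [← Real.rpow_mul (norm_nonneg _), one_div_mul_cancel hk0, Real.rpow_one,
      Real.rpow_natCast] at this
  -- Taylor series
  have HS := Complex.hasSum_taylorSeries_on_ball hdiff hw
  have HS2 : HasSum (fun n : ℕ =>
      iteratedDeriv n h z / ((n.factorial : ℂ) * h z) * (w - z) ^ n) (h w / h z) := by
    have := HS.div_const (h z)
    convert this using 2 with n
    · rfl
    simp only [smul_eq_mul, div_eq_mul_inv, mul_inv]
    ring
  have hf0 : iteratedDeriv 0 h z / ((Nat.factorial 0 : ℂ) * h z) * (w - z) ^ 0 = 1 := by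
    simp [iteratedDeriv_zero, div_self hz]
  have HS3 : HasSum (fun n : ℕ =>
      iteratedDeriv (n + 1) h z / (((n + 1).factorial : ℂ) * h z) * (w - z) ^ (n + 1))
      (h w / h z - 1) := by
    have := (hasSum_nat_add_iff' 1).mpr HS2
    simpa [div_self hz] using this
  have HG : HasSum (fun n : ℕ => u ^ (n + 1)) (u / (1 - u)) := by
    have := (hasSum_geometric_of_lt_one hu0 hu).mul_left u
    have heq : u * (1 - u)⁻¹ = u / (1 - u) := (div_eq_mul_inv u (1 - u)).symm
    rw [heq] at this
    rw [show (fun n : ℕ => u ^ (n + 1)) = fun n => u * u ^ n from funext fun n => pow_succ' u n]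
    exact this
  have hbound : ‖h w / h z - 1‖ ≤ u / (1 - u) := by
    refine HS3.norm_le_of_bounded HG fun n => ?_
    rw [norm_mul, norm_pow]
    have h1 : ‖w - z‖ = ‖z - w‖ := by rw [← norm_neg]; ring_nf
    calc ‖iteratedDeriv (n + 1) h z / (((n + 1).factorial : ℂ) * h z)‖ * ‖w - z‖ ^ (n + 1)
        ≤ γ ^ (n + 1) * ‖z - w‖ ^ (n + 1) := by
          rw [h1]
          exact mul_le_mul_of_nonneg_right (hcoef (n + 1) (by omega)) (by positivity)
      _ = u ^ (n + 1) := by rw [hu_def, mul_pow]; ring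
  have hlow : 1 - u / (1 - u) ≤ ‖h w / h z‖ := by
    have := norm_sub_norm_le (1 : ℂ) (1 - h w / h z)
    simp only [norm_one, sub_sub_cancel] at this
    have h2 : ‖1 - h w / h z‖ = ‖h w / h z - 1‖ := by rw [← norm_neg]; ring_nf
    linarith [h2 ▸ this, hbound]
  have hhigh : ‖h w / h z‖ ≤ 1 / (1 - u) := by
    have h3 : ‖h w / h z‖ ≤ ‖h w / h z - 1‖ + ‖(1 : ℂ)‖ := by
      calc ‖h w / h z‖ = ‖(h w / h z - 1) + 1‖ := by ring_nf
        _ ≤ _ := norm_add_le _ _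
    simp only [norm_one] at h3
    have : ‖h w / h z‖ ≤ u / (1 - u) + 1 := by linarith
    have heq : u / (1 - u) + 1 = 1 / (1 - u) := by field_simp; ring
    linarith [heq ▸ this]
  exact ⟨hlow, hhigh⟩
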